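/- Every nonempty open subsemigroup T of a compact topological group M is an open subgroup of M, and it contains the identity component M₀ of M. -/

import Mathlib

open Filter Topology Set

theorem stmt1 {M : Type*} [Group M] [TopologicalSpace M] [IsTopologicalGroup M]
    [CompactSpace M] (T : Set M) (hne : T.Nonempty) (hopen : IsOpen T)
    (hmul : ∀ a ∈ T, ∀ b ∈ T, a * b ∈ T) :
    (1 : M) ∈ T ∧ (∀ a ∈ T, a⁻¹ ∈ T) ∧ connectedComponent (1 : M) ⊆ T := by
  -- positive powers of elements of T stay in T
  have hpow : ∀ a ∈ T, ∀ n : ℕ, 1 ≤ n → a ^ n ∈ T := by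
    intro a ha n hn
    induction n with
    | zero => omega
    | succ n ih =>
      rcases Nat.lt_or_ge 1 (n + 1) with h | h
      · have hn1 : 1 ≤ n := by omega
        rw [pow_succ]
        exact hmul _ (ih hn1) _ ha
      · have : n = 0 := by omega
        simpa [this] using ha
  -- for every a, powers of a come arbitrarily close to 1
  have hclu : ∀ a : M, ∀ W ∈ 𝓝 (1 : M), ∃ k : ℕ, 2 ≤ k ∧ a ^ k ∈ W := by
    intro a W hW
    obtain ⟨c, hc⟩ := exists_clusterPt_of_compactSpace
      (Filter.map (fun n : ℕ => a ^ n) Filter.atTop)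
    have hcont : Tendsto (fun p : M × M => p.1⁻¹ * p.2) (𝓝 (c, c)) (𝓝 (1 : M)) := by
      have h := ((continuous_fst.inv.mul continuous_snd : Continuous fun p : M × M => p.1⁻¹ * p.2).tendsto ((c, c) : M × M))
      have h' : Tendsto (fun p : M × M => p.1⁻¹ * p.2) (𝓝 (c, c)) (𝓝 (c⁻¹ * c)) := h
      rwa [inv_mul_cancel] at h'
    have hmem : (fun p : M × M => p.1⁻¹ * p.2) ⁻¹' W ∈ 𝓝 ((c, c) : M × M) := hcont hW
    rw [nhds_prod_eq] at hmem
    obtain ⟨V₁, hV₁, V₂, hV₂, hV⟩ := Filter.mem_prod_iff.mp hmem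
    have hfreq : ∃ᶠ n in Filter.atTop, a ^ n ∈ V₁ ∩ V₂ := by
      have : MapClusterPt c Filter.atTop (fun n : ℕ => a ^ n) := hc
      exact mapClusterPt_iff_frequently.mp this _ (Filter.inter_mem hV₁ hV₂)
    obtain ⟨m, hm⟩ := hfreq.exists
    obtain ⟨n, hnm, hn⟩ := (Filter.frequently_atTop.mp hfreq) (m + 2)
    refine ⟨n - m, by omega, ?_⟩
    have hkey : a ^ (n - m) = (a ^ m)⁻¹ * a ^ n := by
      rw [eq_inv_mul_iff_mul_eq, ← pow_add]
      congr 1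
      omega
    rw [hkey]
    exact hV (Set.mk_mem_prod hm.1 hn.2)
  -- inverses lie in the closure of T
  have hinvcl : ∀ a ∈ T, a⁻¹ ∈ closure T := by
    intro a ha
    rw [mem_closure_iff_nhds]
    intro W hW
    have htend : Tendsto (fun x : M => a⁻¹ * x) (𝓝 1) (𝓝 a⁻¹) := by
      have h := (continuous_const.mul continuous_id (f := fun _ : M => a⁻¹) : Continuous fun x : M => a⁻¹ * x).tendsto (1 : M)
      have h' : Tendsto (fun x : M => a⁻¹ * x) (𝓝 1) (𝓝 (a⁻¹ * 1)) := h
      rwa [mul_one] at h'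
    obtain ⟨k, hk2, hk⟩ := hclu a _ (htend hW)
    refine ⟨a⁻¹ * a ^ k, hk, ?_⟩
    have : a⁻¹ * a ^ k = a ^ (k - 1) := by
      rw [eq_comm, eq_inv_mul_iff_mul_eq, ← pow_succ']
      congr 1
      omega
    rw [this]
    exact hpow a ha _ (by omega)
  -- T is closed
  have hclosed : closure T ⊆ T := by
    intro x hx
    obtain ⟨t, ht⟩ := hne
    have h1 : x * t⁻¹ ∈ closure T :=
      map_mem_closure₂ continuous_mul hx (hinvcl t ht) hmul
    have hUopen : IsOpen ((fun y : M => y⁻¹ * x) ⁻¹' T) :=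
      hopen.preimage (continuous_inv.mul continuous_const)
    have hUmem : x * t⁻¹ ∈ (fun y : M => y⁻¹ * x) ⁻¹' T := by
      simp [mul_assoc, ht]
    obtain ⟨s, hsU, hsT⟩ := mem_closure_iff_nhds.mp h1 _ (hUopen.mem_nhds hUmem)
    have : s * (s⁻¹ * x) ∈ T := hmul s hsT _ hsU
    simpa using this
  have hinv : ∀ a ∈ T, a⁻¹ ∈ T := fun a ha => hclosed (hinvcl a ha)
  obtain ⟨a, ha⟩ := hne
  have h1T : (1 : M) ∈ T := by
    have := hmul a ha a⁻¹ (hinv a ha)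
    simpa using this
  refine ⟨h1T, hinv, ?_⟩
  exact (IsClopen.connectedComponent_subset
    ⟨isClosed_of_closure_subset hclosed, hopen⟩ h1T)
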